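/- Let ρₙ : {0,...,n+1} → {0,...,n} be defined by ρₙ(a) = a for a ≤ n and ρₙ(n+1) = n. With τₙ, τₙ₊₁ the substitutions defined by τ_m(a) = a0(a+1) for a ≠ m and τ_m(m) = m0m on {0,...,m}, one has ρₙ ∘ τₙ₊₁ = τₙ ∘ ρₙ as maps on letters (extending ρₙ letter-by-letter to words); consequently ρₙ induces a factor map from the subshift X_{τₙ₊₁} onto X_{τₙ} commuting with the shifts. -/
import Mathlib


/-- Extension of a substitution to finite words, by concatenation. -/
def substWord {A : Type*} (τ : A → List A) (w : List A) : List A :=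
  (w.map τ).flatten

/-- The shift map on two-sided sequences. -/
def shift {A : Type*} (x : ℤ → A) : ℤ → A := fun i => x (i + 1)

/-- Extension of a constant-length-`p` substitution to two-sided sequences:
the block `τ(x_q)` occupies coordinates `[pq, pq + p)` of `τ(x)`. -/
def substExt {A : Type*} [Inhabited A] (τ : A → List A) (p : ℕ) (x : ℤ → A) :
    ℤ → A :=
  fun i => (τ (x (i / (p : ℤ)))).getD (i % (p : ℤ)).toNat default

/-- A substitution is primitive if some power sends every letter to a word
containing every letter. -/
def IsPrimitive {A : Type*} (τ : A → List A) : Prop :=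
  ∃ n : ℕ, ∀ a b : A, a ∈ (substWord τ)^[n] [b]

/-- The subshift generated by `τ`: sequences all of whose finite subwords occur
in some `τⁿ(a)`. -/
def XSet {A : Type*} (τ : A → List A) : Set (ℤ → A) :=
  {x | ∀ (i : ℤ) (l : ℕ), ∃ (n : ℕ) (c : A),
    (List.ofFn fun j : Fin l => x (i + (j : ℤ))) <:+: (substWord τ)^[n] [c]}

/-- Proximality of a pair for the shift on `A^ℤ` (with the product topology):
arbitrarily large central windows agree at some arbitrarily late time. -/
def IsProximalPair {A : Type*} (x y : ℤ → A) : Prop :=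
  ∀ N M : ℕ, ∃ n : ℕ, M ≤ n ∧ ∀ j : ℤ, |j| ≤ (N : ℤ) → x (j + n) = y (j + n)

/-- A Li–Yorke pair for the shift on `A^ℤ`: proximal but not asymptotic
(the two sequences differ at infinitely many coordinates). -/
def IsLiYorkePair {A : Type*} (x y : ℤ → A) : Prop :=
  IsProximalPair x y ∧ {m : ℤ | x m ≠ y m}.Infinite

/-- The substitution `τₘ` on `{0,…,m}`: `τₘ(a) = a 0 (a+1)` for `a ≠ m` and
`τₘ(m) = m 0 m`. -/
def tauN (m : ℕ) : Fin (m + 1) → List (Fin (m + 1)) :=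
  fun a => [a, ⟨0, Nat.succ_pos m⟩, ⟨min (a.1 + 1) m, by omega⟩]

/-- The letter projection `ρₙ : {0,…,n+1} → {0,…,n}`, identity on `{0,…,n}`
and sending `n+1` to `n`. -/
def rhoN (n : ℕ) : Fin (n + 2) → Fin (n + 1) :=
  fun a => ⟨min a.1 n, by omega⟩

/-! ### Auxiliary lemmas -/

lemma substWord_map {A B : Type*} (τ : A → List A) (σ : B → List B) (f : A → B)
    (h : ∀ a, (τ a).map f = σ (f a)) (w : List A) :
    (substWord τ w).map f = substWord σ (w.map f) := by
  simp [substWord, List.map_flatten, List.map_map, Function.comp_def, h]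

lemma substWord_iterate_map {A B : Type*} (τ : A → List A) (σ : B → List B) (f : A → B)
    (h : ∀ a, (τ a).map f = σ (f a)) (k : ℕ) (w : List A) :
    ((substWord τ)^[k] w).map f = (substWord σ)^[k] (w.map f) := by
  induction k generalizing w with
  | zero => simp
  | succ k ih =>
    rw [Function.iterate_succ_apply, Function.iterate_succ_apply, ih,
      substWord_map τ σ f h]

lemma exists_map_infix {A B : Type*} (f : A → B) {w : List B} {l : List A}
    (h : w <:+: l.map f) : ∃ w', w' <:+: l ∧ w'.map f = w := by
  obtain ⟨s, t, hst⟩ := h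
  refine ⟨(l.drop s.length).take w.length,
    (List.take_prefix _ _).isInfix.trans (List.drop_suffix _ _).isInfix, ?_⟩
  rw [List.map_take, List.map_drop, ← hst, List.append_assoc, List.drop_left,
    List.take_left]

lemma window_infix {A : Type*} (y : ℤ → A) (i i' : ℤ) (a b : ℕ)
    (h1 : i' ≤ i) (h2 : i + a ≤ i' + b) :
    (List.ofFn fun j : Fin a => y (i + j)) <:+: (List.ofFn fun j : Fin b => y (i' + j)) := by
  have hw : (List.ofFn fun j : Fin a => y (i + j)) =
      ((List.ofFn fun j : Fin b => y (i' + j)).drop (i - i').toNat).take a := by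
    apply List.ext_getElem
    · simp; omega
    · intro m h₁ h₂
      rw [List.getElem_take, List.getElem_drop, List.getElem_ofFn, List.getElem_ofFn]
      congr 1
      push_cast
      omega
  rw [hw]
  exact (List.take_prefix _ _).isInfix.trans (List.drop_suffix _ _).isInfix

lemma rho_tau_comm (n : ℕ) (a : Fin (n + 2)) :
    (tauN (n + 1) a).map (rhoN n) = tauN n (rhoN n a) := by
  simp only [tauN, rhoN, List.map_cons, List.map_nil, List.cons.injEq, and_true]
  exact ⟨trivial, Fin.ext (by simp), Fin.ext (by simp only []; omega)⟩

lemma xset_forward (n : ℕ) (y : ℤ → Fin (n + 2)) (hy : y ∈ XSet (tauN (n + 1))) :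
    (fun i => rhoN n (y i)) ∈ XSet (tauN n) := by
  intro i len
  obtain ⟨k, c, h⟩ := hy i len
  refine ⟨k, rhoN n c, ?_⟩
  have h2 := h.map (rhoN n)
  rw [substWord_iterate_map _ _ _ (rho_tau_comm n)] at h2
  simpa [List.map_ofFn, Function.comp_def] using h2

lemma xset_lift (n : ℕ) (x : ℤ → Fin (n + 1)) (hx : x ∈ XSet (tauN n)) :
    ∃ y ∈ XSet (tauN (n + 1)), (fun i => rhoN n (y i)) = x := by
  classical
  set τ' := tauN (n + 1) with hτ'
  let V : ℕ → Set (ℤ → Fin (n + 2)) := fun l =>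
    {y | (∀ j : Fin (2 * l + 1), rhoN n (y (-(l : ℤ) + j)) = x (-(l : ℤ) + j)) ∧
      ∃ k c, (List.ofFn fun j : Fin (2 * l + 1) => y (-(l : ℤ) + j)) <:+:
        (substWord τ')^[k] [c]}
  have hclosed : ∀ l, IsClosed (V l) := by
    intro l
    have hVeq : V l = (fun y : ℤ → Fin (n + 2) => fun j : Fin (2 * l + 1) =>
        y (-(l : ℤ) + j)) ⁻¹'
        {v | (∀ j, rhoN n (v j) = x (-(l : ℤ) + j)) ∧
          ∃ k c, List.ofFn v <:+: (substWord τ')^[k] [c]} := rfl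
    rw [hVeq]
    exact (isClosed_discrete _).preimage (continuous_pi fun j => continuous_apply _)
  have hnest : ∀ l, V (l + 1) ⊆ V l := by
    intro l y hy
    obtain ⟨h1, k, c, h2⟩ := hy
    refine ⟨?_, k, c, ?_⟩
    · intro j
      have hj := h1 ⟨j.1 + 1, by omega⟩
      have he : (-(((l : ℕ) + 1 : ℕ) : ℤ) + ((j.1 + 1 : ℕ) : ℤ)) = -(l : ℤ) + j := by
        push_cast; ring
      rwa [he] at hj
    · exact (window_infix y (-(l : ℤ)) (-(((l : ℕ) + 1 : ℕ) : ℤ)) (2 * l + 1)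
        (2 * (l + 1) + 1) (by push_cast; omega) (by push_cast; omega)).trans h2
  have hne : ∀ l, (V l).Nonempty := by
    intro l
    obtain ⟨k, c, hw⟩ := hx (-(l : ℤ)) (2 * l + 1)
    set c' : Fin (n + 2) := ⟨c.1, by omega⟩ with hc'
    have hc : rhoN n c' = c := Fin.ext (by simp [rhoN, hc']; omega)
    have hmapit : ((substWord τ')^[k] [c']).map (rhoN n)
        = (substWord (tauN n))^[k] [c] := by
      rw [substWord_iterate_map _ _ _ (rho_tau_comm n)]
      simp [hc]
    rw [← hmapit] at hw
    obtain ⟨w', hw'inf, hw'map⟩ := exists_map_infix _ hw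
    have hlen : w'.length = 2 * l + 1 := by
      have := congrArg List.length hw'map
      simpa using this
    have key : ∀ (m : ℕ) (hm : m < w'.length),
        rhoN n (w'[m]) = x (-(l : ℤ) + m) := by
      intro m hm
      have h3 := List.getElem_of_eq hw'map (by simpa using hm)
      rw [List.getElem_ofFn] at h3
      rw [List.getElem_map] at h3
      simpa using h3
    refine ⟨fun j => w'.getD (j + l).toNat default, ?_, k, c', ?_⟩
    · intro j
      have hjl : j.1 < w'.length := by rw [hlen]; exact j.2
      have hj : ((-(l : ℤ) + (j : ℤ)) + l).toNat = j.1 := by omega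
      show rhoN n (w'.getD ((-(l : ℤ) + (j : ℤ)) + l).toNat default) = _
      rw [hj, List.getD_eq_getElem _ _ hjl]
      exact key j.1 hjl
    · have hof : (List.ofFn fun j : Fin (2 * l + 1) =>
          w'.getD ((-(l : ℤ) + (j : ℤ)) + l).toNat default) = w' := by
        apply List.ext_getElem
        · simp [hlen]
        · intro m h₁ h₂
          rw [List.getElem_ofFn]
          have hm : ((-(l : ℤ) + ((m : ℕ) : ℤ)) + l).toNat = m := by omega
          show w'.getD ((-(l : ℤ) + ((m : ℕ) : ℤ)) + l).toNat default = w'[m]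
          rw [hm, List.getD_eq_getElem _ _ h₂]
      rw [hof]
      exact hw'inf
  obtain ⟨y, hy⟩ := IsCompact.nonempty_iInter_of_sequence_nonempty_isCompact_isClosed
    V hnest hne ((hclosed 0).isCompact) hclosed
  simp only [Set.mem_iInter] at hy
  refine ⟨y, ?_, ?_⟩
  · intro i len
    obtain ⟨k, c, h2⟩ := (hy (i.natAbs + len)).2
    exact ⟨k, c, (window_infix y i (-((i.natAbs + len : ℕ) : ℤ)) len
      (2 * (i.natAbs + len) + 1) (by omega) (by omega)).trans h2⟩
  · funext j
    set l := j.natAbs with hl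
    have h1 := (hy l).1 ⟨(j + l).toNat, by omega⟩
    have he : (-(l : ℤ) + (((j + (l : ℤ)).toNat : ℕ) : ℤ)) = j := by omega
    rwa [he] at h1

/-- `ρₙ ∘ τₙ₊₁ = τₙ ∘ ρₙ` on letters, and hence `ρₙ` (applied coordinatewise)
induces a factor map from `X_{τₙ₊₁}` onto `X_{τₙ}` commuting with the
shifts. -/
theorem stmt18 (n : ℕ) (hn : 1 ≤ n) :
    (∀ a : Fin (n + 2), (tauN (n + 1) a).map (rhoN n) = tauN n (rhoN n a)) ∧
      Continuous (fun x : ℤ → Fin (n + 2) => fun i => rhoN n (x i)) ∧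
      (fun x : ℤ → Fin (n + 2) => fun i => rhoN n (x i)) '' XSet (tauN (n + 1))
        = XSet (tauN n) ∧
      (∀ x : ℤ → Fin (n + 2),
        (fun i => rhoN n (shift x i)) = shift (fun i => rhoN n (x i))) := by
  refine ⟨rho_tau_comm n, ?_, ?_, fun x => rfl⟩
  · exact continuous_pi fun i =>
      show Continuous ((rhoN n) ∘ fun x : ℤ → Fin (n + 2) => x i) from
        continuous_of_discreteTopology.comp (continuous_apply i)
  · apply Set.Subset.antisymm
    · rintro z ⟨y, hy, rfl⟩
      exact xset_forward n y hy
    · intro z hz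
      obtain ⟨y, hy, he⟩ := xset_lift n z hz
      exact ⟨y, hy, he⟩
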